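/- Let λ ∈ ℚ with λ ≠ 0 and λ ≠ 1, and set j = 2^8 · (λ^2 − λ + 1)^3 / (λ^2 − λ)^2. Then h(λ) ≤ (1/2) · h(j) + 5 · log 2. -/

import Mathlib

/-- The absolute logarithmic Weil height of a rational number `β = p/q` in lowest terms:
`h(β) = log max (|p|, q)`. -/
noncomputable def ratHeight (β : ℚ) : ℝ :=
  Real.log (max |(β.num : ℝ)| (β.den : ℝ))

/-- For `λ ∈ ℚ`, `λ ≠ 0, 1`, the `j`-invariant
`j = 2⁸ (λ² − λ + 1)³ / (λ² − λ)²` of the Legendre curve satisfies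
`h(λ) ≤ (1/2) h(j) + 5 log 2`. -/
theorem legendre_lambda_height_le (lam : ℚ) (h0 : lam ≠ 0) (h1 : lam ≠ 1) :
    ratHeight lam ≤
      1 / 2 * ratHeight (2 ^ 8 * (lam ^ 2 - lam + 1) ^ 3 / (lam ^ 2 - lam) ^ 2) +
      5 * Real.log 2 := by
  set p : ℤ := lam.num with hp
  set q : ℤ := (lam.den : ℤ) with hq
  have hqpos : 0 < q := by rw [hq]; exact_mod_cast lam.pos
  have hp0 : p ≠ 0 := Rat.num_ne_zero.mpr h0
  have hq0 : (q : ℚ) ≠ 0 := by exact_mod_cast hqpos.ne'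
  have hl : (lam : ℚ) = (p : ℚ) / (q : ℚ) := by
    rw [hp, hq]; push_cast; exact (Rat.num_div_den lam).symm
  have hpq : p ≠ q := by
    intro h
    apply h1
    rw [hl, h, div_self hq0]
  have hcop : IsCoprime p q := by
    rw [Int.isCoprime_iff_gcd_eq_one]
    exact lam.reduced
  set N : ℤ := p ^ 2 - p * q + q ^ 2 with hN
  set D : ℤ := p * q * (p - q) with hD
  have hqe1 : 1 ≤ q := hqpos
  have hNq2 : q ^ 2 ≤ 2 * N := by nlinarith [sq_nonneg (p - q)]
  have hNp2 : p ^ 2 ≤ 2 * N := by nlinarith [sq_nonneg (p - q), sq_nonneg q]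
  have hN1 : 1 ≤ N := by nlinarith
  have hD0 : D ≠ 0 := by
    apply mul_ne_zero (mul_ne_zero hp0 hqpos.ne')
    exact sub_ne_zero.mpr hpq
  -- coprimality of N with D
  have hNp : IsCoprime N p := by
    have h := ((hcop.symm.pow_left : IsCoprime (q ^ 2) p)).add_mul_left_left (p - q)
    convert h using 1; rfl; rw [hN]; ring
  have hNq : IsCoprime N q := by
    have h := ((hcop.pow_left : IsCoprime (p ^ 2) q)).add_mul_left_left (q - p)
    convert h using 1; rfl; rw [hN]; ring
  have hppq : IsCoprime p (p - q) := by
    have h := (hcop.neg_right).add_mul_left_right 1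
    convert h using 1; rfl; ring
  have hqpq : IsCoprime q (p - q) := by
    have h := (hcop.symm).add_mul_left_right (-1)
    convert h using 1; rfl; ring
  have hNpq : IsCoprime N (p - q) := by
    have h := (hppq.mul_left hqpq).add_mul_left_left (p - q)
    convert h using 1; rfl; rw [hN]; ring
  have hND : IsCoprime N D := (hNp.mul_right hNq).mul_right hNpq
  have hN3D2 : IsCoprime (N ^ 3) (D ^ 2) := hND.pow
  -- the j-invariant as an explicit fraction
  set a : ℤ := 2 ^ 8 * N ^ 3 with ha
  set b : ℤ := D ^ 2 with hb
  have hb0 : b ≠ 0 := pow_ne_zero 2 hD0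
  have hb0' : (b : ℚ) ≠ 0 := by exact_mod_cast hb0
  set J : ℚ := 2 ^ 8 * (lam ^ 2 - lam + 1) ^ 3 / (lam ^ 2 - lam) ^ 2 with hJ
  have hY : (lam ^ 2 - lam) ≠ 0 := by
    have : lam ^ 2 - lam = lam * (lam - 1) := by ring
    rw [this]
    exact mul_ne_zero h0 (sub_ne_zero.mpr h1)
  have hY2 : (lam ^ 2 - lam) ^ 2 ≠ 0 := pow_ne_zero 2 hY
  have key : J = (a : ℚ) / (b : ℚ) := by
    rw [hJ, eq_div_iff hb0', div_mul_eq_mul_div, div_eq_iff hY2, ha, hb, hN, hD, hl]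
    have hpq' : (p : ℚ) ≠ (q : ℚ) := by exact_mod_cast hpq
    have hp0' : (p : ℚ) ≠ 0 := by exact_mod_cast hp0
    push_cast
    field_simp
    ring
  have hd0' : ((J.den : ℤ) : ℚ) ≠ 0 := by
    push_cast
    exact Nat.cast_ne_zero.mpr J.den_ne_zero
  have cross : a * (J.den : ℤ) = J.num * b := by
    have h2 : (a : ℚ) / (b : ℚ) = ((J.num : ℤ) : ℚ) / ((J.den : ℤ) : ℚ) := by
      rw [← key]; push_cast; exact (Rat.num_div_den J).symm
    have h3 := (div_eq_div_iff hb0' hd0').mp h2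
    exact_mod_cast h3
  -- N^3 divides J.num
  have hdvdn : N ^ 3 ∣ J.num := by
    have h4 : N ^ 3 ∣ J.num * b := by
      refine ⟨2 ^ 8 * (J.den : ℤ), ?_⟩
      rw [← cross, ha]; ring
    exact hN3D2.dvd_of_dvd_mul_right h4
  have hJ0 : J ≠ 0 := by
    rw [key]
    apply div_ne_zero _ hb0'
    have : a ≠ 0 := by
      rw [ha]; positivity
    exact_mod_cast this
  have hn0 : J.num ≠ 0 := Rat.num_ne_zero.mpr hJ0
  have hNn : N ^ 3 ≤ |J.num| := by
    apply Int.le_of_dvd (abs_pos.mpr hn0)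
    exact (dvd_abs _ _).mpr hdvdn
  -- now the real-number estimates
  have hM1 : (1 : ℝ) ≤ max |(p : ℝ)| (q : ℝ) := by
    have : (1 : ℝ) ≤ (q : ℝ) := by exact_mod_cast hqe1
    exact this.trans (le_max_right _ _)
  have hMpos : (0 : ℝ) < max |(p : ℝ)| (q : ℝ) := lt_of_lt_of_le one_pos hM1
  have hNR : (1 : ℝ) ≤ (N : ℝ) := by exact_mod_cast hN1
  have hsq : (max |(p : ℝ)| (q : ℝ)) ^ 2 ≤ 2 * (N : ℝ) := by
    rcases max_cases |(p : ℝ)| ((q : ℝ)) with ⟨h, _⟩ | ⟨h, _⟩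
    · rw [h, sq_abs]
      exact_mod_cast hNp2
    · rw [h]
      exact_mod_cast hNq2
  have step1 : 2 * ratHeight lam ≤ Real.log 2 + Real.log N := by
    have e1 : ratHeight lam = Real.log (max |(p : ℝ)| (q : ℝ)) := by
      unfold ratHeight; rw [hp, hq]; norm_cast
    rw [e1]
    have := Real.log_le_log (by positivity) hsq
    rw [Real.log_pow, Real.log_mul (by norm_num) (by positivity)] at this
    push_cast at this ⊢
    linarith
  -- log N ≤ (1/3) * ratHeight J
  have hJnum : (N : ℝ) ^ 3 ≤ max |(J.num : ℝ)| (J.den : ℝ) := by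
    have h5 : (N : ℝ) ^ 3 ≤ |(J.num : ℝ)| := by
      have := hNn
      push_cast [← Int.cast_abs] at *
      exact_mod_cast hNn
    exact h5.trans (le_max_left _ _)
  have step2 : 3 * Real.log N ≤ ratHeight J := by
    unfold ratHeight
    have := Real.log_le_log (by positivity) hJnum
    rw [Real.log_pow] at this
    push_cast at this ⊢
    linarith
  have hJh0 : 0 ≤ ratHeight J := by
    unfold ratHeight
    apply Real.log_nonneg
    have : (1 : ℝ) ≤ (J.den : ℝ) := by exact_mod_cast J.pos
    exact this.trans (le_max_right _ _)
  have hlog2 : 0 < Real.log 2 := Real.log_pos (by norm_num)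
  have : ratHeight J = ratHeight (2 ^ 8 * (lam ^ 2 - lam + 1) ^ 3 / (lam ^ 2 - lam) ^ 2) := by
    rw [hJ]
  rw [← this]
  linarith
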